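/- Let m_1,...,m_l be odd positive integers, m = lcm(m_1,...,m_l), and for c(x), d(x) in R = ∏ Z4[x]/(x^{m_i}−1) define d ∘ c = Σ_i d_i(x) · c̃_i(x) · θ_i(x^{m_i}) in Z4[x]/(x^m−1), where c̃_i(x) = x^{m−deg(c_i)−1} c_i*(x) with c_i*(x) = x^{deg c_i} c_i(1/x), and θ_i(x^{m_i}) = (x^m−1)/(x^{m_i}−1). Then for vectors c, d ∈ Z4^{m_1}×···×Z4^{m_l} with polynomial representatives c(x), d(x): d is orthogonal (under the Euclidean inner product) to c and to all simultaneous cyclic shifts of c if and only if d(x) ∘ c(x) = 0. -/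

import Mathlib

open Polynomial
open Fin.NatCast

/-- The simultaneous cyclic shift of each block. -/
def shiftAll {l : ℕ} (m : Fin l → ℕ) [∀ i, NeZero (m i)]
    (c : ∀ i, Fin (m i) → ZMod 4) : ∀ i, Fin (m i) → ZMod 4 :=
  fun i j => c i (j - 1)

/-- The Euclidean inner product on `(ℤ/4)^{m₁} × ⋯ × (ℤ/4)^{m_l}`. -/
def innerP {l : ℕ} (m : Fin l → ℕ) (c d : ∀ i, Fin (m i) → ZMod 4) : ZMod 4 :=
  ∑ i, ∑ j, c i j * d i j

lemma fin_natCast_congr {n : ℕ} [NeZero n] {a b : ℕ} (h : a % n = b % n) :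
    ((a : Fin n)) = (b : Fin n) := by
  apply Fin.ext
  simp [Fin.val_natCast, h]

lemma nat_eq_of_zmodCast {n a b : ℕ} (ha : a < n) (hb : b < n)
    (h : (a : ZMod n) = (b : ZMod n)) : a = b := by
  have h2 := (ZMod.natCast_eq_natCast_iff a b n).mp h
  rwa [Nat.ModEq, Nat.mod_eq_of_lt ha, Nat.mod_eq_of_lt hb] at h2

lemma fin_sub_one_sub (n : ℕ) [NeZero n] (j r : Fin n) :
    j - 1 - r = j - (((r : ℕ) + 1 : ℕ) : Fin n) := by
  have h : (((r : ℕ) + 1 : ℕ) : Fin n) = r + 1 := by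
    rw [Nat.cast_add, Nat.cast_one, Fin.cast_val_eq_self]
  rw [h, sub_sub, add_comm]

lemma exp_key {n M : ℕ} [NeZero n] (hd : n ∣ M) (hM : 0 < M) (j r : Fin n) :
    ((j : ℕ) + (M - 1 - ((j - 1 - r : Fin n) : ℕ))) % n = (r : ℕ) := by
  have hn : 0 < n := Nat.pos_of_ne_zero (NeZero.ne n)
  have hnM : n ≤ M := Nat.le_of_dvd hM hd
  set w : ℕ := ((j - 1 - r : Fin n) : ℕ) with hw
  have hwlt : w < n := (j - 1 - r).isLt
  have hwval : w = ((n - ((r : ℕ) + 1) % n) + (j : ℕ)) % n := by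
    rw [hw, fin_sub_one_sub, Fin.sub_def]
    simp only [Fin.val_natCast]
  apply nat_eq_of_zmodCast (Nat.mod_lt _ hn) r.isLt
  have hMz : ((M : ℕ) : ZMod n) = 0 := (ZMod.natCast_eq_zero_iff M n).mpr hd
  have hwz : ((w : ℕ) : ZMod n) = (j : ℕ) - ((r : ℕ) + 1) := by
    rw [hwval, ZMod.natCast_mod, Nat.cast_add,
      Nat.cast_sub (Nat.mod_lt _ hn).le, ZMod.natCast_mod, ZMod.natCast_self]
    push_cast
    ring
  have h1w : 1 + w ≤ M := by omega
  have hsub : (M - 1 - w) = M - (1 + w) := by omega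
  rw [ZMod.natCast_mod, Nat.cast_add, hsub, Nat.cast_sub h1w, hMz, Nat.cast_add,
    Nat.cast_one, hwz]
  ring

lemma sum_range_add' {β : Type*} [AddCommMonoid β] (f : ℕ → β) (a b : ℕ) :
    ∑ t ∈ Finset.range (a + b), f t
      = (∑ t ∈ Finset.range a, f t) + ∑ r ∈ Finset.range b, f (a + r) := by
  induction b with
  | zero => simp
  | succ b ih => rw [← Nat.add_assoc, Finset.sum_range_succ, ih, Finset.sum_range_succ, add_assoc]

lemma sum_range_mul_split {β : Type*} [AddCommMonoid β] (f : ℕ → β) (n k : ℕ) :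
    ∑ t ∈ Finset.range (n * k), f t
      = ∑ s ∈ Finset.range n, ∑ r ∈ Finset.range k, f (s * k + r) := by
  induction n with
  | zero => simp
  | succ n ih =>
    have h1 : (n + 1) * k = n * k + k := by ring
    rw [h1, sum_range_add', ih, Finset.sum_range_succ]

theorem theta_base {R : Type*} [CommRing R] (mi M : ℕ) (hd : mi ∣ M) :
    (X : R[X]) ^ mi * (∑ s ∈ Finset.range (M / mi), X ^ (s * mi))
      - (∑ s ∈ Finset.range (M / mi), X ^ (s * mi)) = X ^ M - 1 := by
  have h := Finset.sum_range_sub (fun s => (X : R[X]) ^ (s * mi)) (M / mi)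
  rw [Nat.div_mul_cancel hd] at h
  simp only [zero_mul, pow_zero] at h
  rw [← h, Finset.mul_sum, ← Finset.sum_sub_distrib]
  apply Finset.sum_congr rfl
  intro s _
  rw [← pow_add]
  congr 2
  ring

theorem theta_dvd {R : Type*} [CommRing R] (mi M : ℕ) (hd : mi ∣ M) (e : ℕ) :
    (X ^ M - 1 : R[X]) ∣
      X ^ e * (∑ s ∈ Finset.range (M / mi), X ^ (s * mi))
        - X ^ (e % mi) * (∑ s ∈ Finset.range (M / mi), X ^ (s * mi)) := by
  set Θ : R[X] := ∑ s ∈ Finset.range (M / mi), X ^ (s * mi) with hΘ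
  have key : ∀ q r : ℕ, (X ^ M - 1 : R[X]) ∣ X ^ (mi * q + r) * Θ - X ^ r * Θ := by
    intro q
    induction q with
    | zero => simp
    | succ q ih =>
      intro r
      have h2 : X ^ (mi * (q+1) + r) * Θ - X ^ r * Θ
          = X ^ (mi * q + r) * (X ^ mi * Θ - Θ) + (X ^ (mi * q + r) * Θ - X ^ r * Θ) := by
        have h3 : mi * (q+1) + r = (mi * q + r) + mi := by ring
        rw [h3, pow_add]
        ring
      rw [h2, theta_base mi M hd]
      exact dvd_add (dvd_mul_left _ _) (ih r)
  have := key (e / mi) (e % mi)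
  rwa [Nat.div_add_mod e mi] at this

theorem orthogonality_iff_circ_zero (l : ℕ) (m : Fin l → ℕ) [∀ i, NeZero (m i)]
    (hodd : ∀ i, Odd (m i)) (M : ℕ) (hM : M = Finset.univ.lcm m)
    (c d : ∀ i, Fin (m i) → ZMod 4) :
    (∀ N : ℕ, innerP m d ((shiftAll m)^[N] c) = 0) ↔
      Ideal.Quotient.mk (Ideal.span {(X : Polynomial (ZMod 4)) ^ M - 1})
        (∑ i, (∑ j : Fin (m i), C (d i j) * X ^ (j : ℕ)) *
              (∑ j : Fin (m i), C (c i j) * X ^ (M - 1 - (j : ℕ))) *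
              (∑ s ∈ Finset.range (M / m i), X ^ (s * m i))) = 0 := by
  classical
  haveI : Nontrivial (ZMod 4) := ⟨0, 1, by decide⟩
  have hdvd : ∀ i, m i ∣ M := fun i => by
    rw [hM]; exact Finset.dvd_lcm (Finset.mem_univ i)
  have hMpos : 0 < M := by
    rcases Nat.eq_zero_or_pos M with h0 | h
    · exfalso
      rw [hM, Finset.lcm_eq_zero_iff] at h0
      obtain ⟨i, -, hi⟩ := h0
      exact (NeZero.ne (m i)) hi
    · exact h
  set φ := Ideal.Quotient.mk (Ideal.span {(X : Polynomial (ZMod 4)) ^ M - 1}) with hφ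
  set Θ : Fin l → Polynomial (ZMod 4) :=
    fun i => ∑ s ∈ Finset.range (M / m i), X ^ (s * m i) with hΘ
  set a : ℕ → ZMod 4 :=
    fun N => ∑ i, ∑ j, d i j * c i (j - (N : Fin (m i))) with ha
  -- Step 1 : inner products are `a`
  have hshift : ∀ (N : ℕ) (c : ∀ i, Fin (m i) → ZMod 4) (i : Fin l) (j : Fin (m i)),
      ((shiftAll m)^[N] c) i j = c i (j - (N : Fin (m i))) := by
    intro N
    induction N with
    | zero => intro c i j; simp
    | succ N ih =>
      intro c i j
      rw [Function.iterate_succ_apply, ih (shiftAll m c) i j]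
      show c i (j - (N : Fin (m i)) - 1) = _
      rw [sub_sub]
      congr 2
      rw [Nat.cast_add, Nat.cast_one]
  have hinner : ∀ N : ℕ, innerP m d ((shiftAll m)^[N] c) = a N := by
    intro N
    simp only [innerP, ha]
    exact Finset.sum_congr rfl fun i _ => Finset.sum_congr rfl fun j _ => by
      rw [hshift N c i j]
  -- Step 2 : periodicity
  have hper : ∀ N : ℕ, a ((N + M - 1) % M + 1) = a N := by
    intro N
    simp only [ha]
    refine Finset.sum_congr rfl fun i _ => Finset.sum_congr rfl fun j _ => ?_
    have h2 : ((N + M - 1) % M + 1) ≡ (N + M - 1 + 1) [MOD m i] :=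
      Nat.ModEq.add_right 1 ((Nat.mod_modEq _ M).of_dvd (hdvd i))
    have h3 : N + M - 1 + 1 = N + M := by omega
    obtain ⟨t, ht⟩ := hdvd i
    have h4 : (N + M) % m i = N % m i := by
      rw [ht, Nat.add_mul_mod_self_left]
    have hmod : ((N + M - 1) % M + 1) % m i = N % m i := by
      calc ((N + M - 1) % M + 1) % m i = (N + M - 1 + 1) % m i := h2
        _ = (N + M) % m i := by rw [h3]
        _ = N % m i := h4
    rw [fin_natCast_congr hmod]
  -- Step 3 : the low-degree representative Q
  set Q : Polynomial (ZMod 4) := ∑ t ∈ Finset.range M, C (a (t+1)) * X ^ t with hQdef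
  have hcoeff : ∀ t, Q.coeff t = if t < M then a (t+1) else 0 := by
    intro t
    rw [hQdef, Polynomial.finset_sum_coeff]
    simp only [Polynomial.coeff_C_mul, Polynomial.coeff_X_pow, mul_ite, mul_one, mul_zero]
    rw [Finset.sum_ite_eq (Finset.range M) t (fun t' => a (t'+1))]
    simp [Finset.mem_range]
  have hQzero : Q = 0 ↔ ∀ t, t < M → a (t+1) = 0 := by
    constructor
    · intro h t ht
      have h1 := hcoeff t
      rw [h, Polynomial.coeff_zero, if_pos ht] at h1
      exact h1.symm
    · intro h
      apply Polynomial.ext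
      intro t
      rw [hcoeff t, Polynomial.coeff_zero]
      split
      · exact h t ‹t < M›
      · rfl
  -- Step 4 : φ Q = 0 ↔ Q = 0
  have hmonic : (X ^ M - 1 : Polynomial (ZMod 4)).Monic := by
    have := Polynomial.monic_X_pow_sub_C (1 : ZMod 4) hMpos.ne'
    simpa using this
  have hdegQ : Q.degree < (X ^ M - 1 : Polynomial (ZMod 4)).degree := by
    have hdg : (X ^ M - 1 : Polynomial (ZMod 4)).degree = (M : ℕ) := by
      have := Polynomial.degree_X_pow_sub_C hMpos (1 : ZMod 4)
      simpa using this
    rw [hdg]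
    apply lt_of_le_of_lt (Polynomial.degree_sum_le _ _)
    rw [Finset.sup_lt_iff (by exact_mod_cast WithBot.bot_lt_coe (M : ℕ))]
    intro t ht
    apply lt_of_le_of_lt (Polynomial.degree_mul_le _ _)
    have h1 : (C (a (t+1))).degree ≤ 0 := Polynomial.degree_C_le
    have h2 : ((X : Polynomial (ZMod 4)) ^ t).degree ≤ t := Polynomial.degree_X_pow_le t
    calc (C (a (t+1))).degree + ((X : Polynomial (ZMod 4)) ^ t).degree
        ≤ 0 + (t : WithBot ℕ) := add_le_add h1 h2
      _ = (t : WithBot ℕ) := by rw [zero_add]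
      _ < (M : WithBot ℕ) := by
          exact_mod_cast (Finset.mem_range.mp ht)
  have hφQ : φ Q = 0 ↔ Q = 0 := by
    constructor
    · intro h
      rw [hφ, Ideal.Quotient.eq_zero_iff_mem, Ideal.mem_span_singleton] at h
      have := (Polynomial.modByMonic_eq_zero_iff_dvd hmonic).mpr h
      rwa [(Polynomial.modByMonic_eq_self_iff hmonic).mpr hdegQ] at this
    · intro h; rw [h, map_zero]
  -- Step 5 : φ P = φ Q
  have hPQ : φ (∑ i, (∑ j : Fin (m i), C (d i j) * X ^ (j : ℕ)) *
              (∑ j : Fin (m i), C (c i j) * X ^ (M - 1 - (j : ℕ))) * Θ i) = φ Q := by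
    have hNF : ∀ (i : Fin l) (j : Fin (m i)), True := fun _ _ => trivial
    -- P side
    have hP : φ (∑ i, (∑ j : Fin (m i), C (d i j) * X ^ (j : ℕ)) *
              (∑ j : Fin (m i), C (c i j) * X ^ (M - 1 - (j : ℕ))) * Θ i)
        = ∑ i, ∑ j : Fin (m i), ∑ r ∈ Finset.range (m i),
            φ (C (d i j) * C (c i (j - ((r + 1 : ℕ) : Fin (m i)))) * X ^ r * Θ i) := by
      rw [map_sum]
      refine Finset.sum_congr rfl fun i _ => ?_
      rw [Finset.sum_mul_sum, Finset.sum_mul, map_sum]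
      refine Finset.sum_congr rfl fun j _ => ?_
      rw [Finset.sum_mul, map_sum]
      rw [← Fin.sum_univ_eq_sum_range
        (fun r => φ (C (d i j) * C (c i (j - ((r + 1 : ℕ) : Fin (m i)))) * X ^ r * Θ i)) (m i)]
      conv_lhs => rw [← Equiv.sum_comp (Equiv.subLeft (j - 1))
        (fun k => φ (C (d i j) * X ^ (j : ℕ) * (C (c i k) * X ^ (M - 1 - (k : ℕ))) * Θ i))]
      refine Finset.sum_congr rfl fun r _ => ?_
      simp only [Equiv.subLeft_apply]
      rw [← fin_sub_one_sub]
      rw [hφ, Ideal.Quotient.eq, Ideal.mem_span_singleton]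
      have hE := exp_key (hdvd i) hMpos j r
      have hdv := theta_dvd (R := ZMod 4) (m i) M (hdvd i)
        ((j : ℕ) + (M - 1 - ((j - 1 - r : Fin (m i)) : ℕ)))
      rw [hE] at hdv
      have h3 : C (d i j) * X ^ (j : ℕ)
            * (C (c i (j - 1 - r)) * X ^ (M - 1 - ((j - 1 - r : Fin (m i)) : ℕ))) * Θ i
          - C (d i j) * C (c i (j - 1 - r)) * X ^ ((r : Fin (m i)) : ℕ) * Θ i
        = (C (d i j) * C (c i (j - 1 - r))) *
          (X ^ ((j : ℕ) + (M - 1 - ((j - 1 - r : Fin (m i)) : ℕ))) * Θ i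
            - X ^ ((r : Fin (m i)) : ℕ) * Θ i) := by
        rw [pow_add]; ring
      rw [h3]
      exact Dvd.dvd.mul_left hdv _
    -- Q side
    have hQs : φ Q = ∑ i, ∑ j : Fin (m i), ∑ r ∈ Finset.range (m i),
            φ (C (d i j) * C (c i (j - ((r + 1 : ℕ) : Fin (m i)))) * X ^ r * Θ i) := by
      rw [hQdef, map_sum]
      have step1 : ∀ t ∈ Finset.range M,
          φ (C (a (t+1)) * X ^ t) = ∑ i, ∑ j : Fin (m i),
            φ (C (d i j) * C (c i (j - ((t + 1 : ℕ) : Fin (m i)))) * X ^ t) := by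
        intro t _
        have hexp : C (a (t+1)) * (X : Polynomial (ZMod 4)) ^ t
            = ∑ i, ∑ j : Fin (m i),
              C (d i j) * C (c i (j - ((t + 1 : ℕ) : Fin (m i)))) * X ^ t := by
          simp only [ha]
          rw [map_sum, Finset.sum_mul]
          refine Finset.sum_congr rfl fun i _ => ?_
          rw [map_sum, Finset.sum_mul]
          refine Finset.sum_congr rfl fun j _ => ?_
          rw [C_mul]
        rw [hexp, map_sum]
        exact Finset.sum_congr rfl fun i _ => map_sum _ _ _
      rw [Finset.sum_congr rfl step1, Finset.sum_comm]
      refine Finset.sum_congr rfl fun i _ => ?_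
      rw [Finset.sum_comm]
      refine Finset.sum_congr rfl fun j _ => ?_
      have hM' : Finset.range M = Finset.range ((M / m i) * m i) := by
        rw [Nat.div_mul_cancel (hdvd i)]
      rw [hM', sum_range_mul_split, Finset.sum_comm]
      refine Finset.sum_congr rfl fun r _ => ?_
      rw [← map_sum]
      congr 1
      rw [hΘ]
      simp only []
      rw [Finset.mul_sum]
      refine Finset.sum_congr rfl fun s _ => ?_
      have hcast : ((s * m i + r + 1 : ℕ) : Fin (m i)) = ((r + 1 : ℕ) : Fin (m i)) := by
        apply fin_natCast_congr
        have : s * m i + r + 1 = (r + 1) + s * (m i) := by ring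
        rw [this, Nat.add_mul_mod_self_right]
      rw [hcast, pow_add]
      ring
    rw [hP, hQs]
  -- Assemble
  show (∀ N : ℕ, innerP m d ((shiftAll m)^[N] c) = 0) ↔
      φ (∑ i, (∑ j : Fin (m i), C (d i j) * X ^ (j : ℕ)) *
              (∑ j : Fin (m i), C (c i j) * X ^ (M - 1 - (j : ℕ))) * Θ i) = 0
  constructor
  · intro h
    rw [hPQ]
    apply (hφQ).mpr
    apply hQzero.mpr
    intro t ht
    rw [← hinner (t+1)] at *
    exact h (t+1)
  · intro h N
    rw [hinner N, ← hper N]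
    have hQ0 : Q = 0 := hφQ.mp (by rw [← hPQ]; exact h)
    exact hQzero.mp hQ0 _ (Nat.mod_lt _ hMpos)
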